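/- arXiv:1302.4785 — 3 statements merged into one kernel-verified Lean document; each statement's English description precedes it below -/
import Mathlib

section
/- Let n ≥ 1, let λ_1, …, λ_n be positive reals, and let P > 0. Suppose μ > 0 satisfies Σ_{i=1}^{n} max(μ − 1/λ_i, 0) = P, and set p_i = max(μ − 1/λ_i, 0) (the water-filling power allocation). Then for every q ∈ ℝ^n with q_i ≥ 0 for all i and Σ_{i=1}^{n} q_i ≤ P, one has Σ_{i=1}^{n} log(1 + q_i λ_i) ≤ Σ_{i=1}^{n} log(1 + p_i λ_i). -/
lemma waterfill_term (lam μ q : ℝ) (hlam : 0 < lam) (hμ : 0 < μ) (hq : 0 ≤ q) :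
    Real.log (1 + q * lam) ≤
      Real.log (1 + max (μ - 1 / lam) 0 * lam) + (q - max (μ - 1 / lam) 0) / μ := by
  have h1q : (0:ℝ) < 1 + q * lam := by positivity
  rcases le_or_gt (μ - 1 / lam) 0 with h | h
  · rw [max_eq_right h]
    simp only [zero_mul, add_zero, Real.log_one, zero_add, sub_zero]
    have hlog : Real.log (1 + q * lam) ≤ q * lam := by
      have := Real.log_le_sub_one_of_pos h1q
      linarith
    have hlm : lam * μ ≤ 1 := by
      have : μ ≤ 1 / lam := by linarith
      calc lam * μ ≤ lam * (1 / lam) := by nlinarith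
        _ = 1 := by field_simp
    have : q * lam ≤ q / μ := by
      rw [div_eq_mul_inv]
      have hinv : lam ≤ μ⁻¹ := by
        rw [← one_div]
        exact (le_div_iff₀ hμ).2 hlm
      nlinarith
    linarith
  · rw [max_eq_left h.le]
    have hpl : 1 + (μ - 1 / lam) * lam = μ * lam := by field_simp; ring
    rw [hpl]
    have hml : (0:ℝ) < μ * lam := by positivity
    have key := Real.log_le_sub_one_of_pos (show (0:ℝ) < (1 + q * lam) / (μ * lam) by positivity)
    rw [Real.log_div (ne_of_gt h1q) (ne_of_gt hml)] at key
    have : (1 + q * lam) / (μ * lam) - 1 = (q - (μ - 1 / lam)) / μ := by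
      field_simp; ring
    linarith

/-- Optimality of water-filling for parallel Gaussian channels: if `μ > 0` is a water
level such that the powers `p i = max (μ - 1 / lam i) 0` sum to the budget `P`, then the
water-filling allocation maximizes `∑ i, log (1 + q i * lam i)` among all nonnegative
power allocations `q` with `∑ i, q i ≤ P`. -/
theorem waterfilling_optimal
    (n : ℕ) (hn : 1 ≤ n) (lam : Fin n → ℝ) (hlam : ∀ i, 0 < lam i)
    (P : ℝ) (hP : 0 < P) (μ : ℝ) (hμ : 0 < μ)
    (hsum : ∑ i, max (μ - 1 / lam i) 0 = P)
    (q : Fin n → ℝ) (hq : ∀ i, 0 ≤ q i) (hqP : ∑ i, q i ≤ P) :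
    ∑ i, Real.log (1 + q i * lam i) ≤
      ∑ i, Real.log (1 + max (μ - 1 / lam i) 0 * lam i) := by
  have hterm : ∀ i ∈ Finset.univ, Real.log (1 + q i * lam i) ≤
      Real.log (1 + max (μ - 1 / lam i) 0 * lam i) + (q i - max (μ - 1 / lam i) 0) / μ :=
    fun i _ => waterfill_term (lam i) μ (q i) (hlam i) hμ (hq i)
  have := Finset.sum_le_sum hterm
  rw [Finset.sum_add_distrib] at this
  have hslack : ∑ i, (q i - max (μ - 1 / lam i) 0) / μ ≤ 0 := by
    rw [← Finset.sum_div, Finset.sum_sub_distrib, hsum]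
    apply div_nonpos_of_nonpos_of_nonneg <;> linarith
  linarith
end

section
/- Let N ≥ m ≥ 1, let G be a complex matrix of size N × m, and let λ_1 ≥ … ≥ λ_m ≥ 0 be the eigenvalues of Gᴴ G in non-increasing order, with λ_1 > 0. Let P > 0, let μ > 0 satisfy Σ_{i : λ_i > 0} max(μ − 1/λ_i, 0) = P, and set p_i = max(μ − 1/λ_i, 0) for λ_i > 0 and p_i = 0 for λ_i = 0. Then for every m × m Hermitian positive semidefinite matrix Σ with trace(Σ) ≤ P, one has det( I_N + G Σ Gᴴ ) ≤ Π_{i=1}^{m} (1 + p_i λ_i). -/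
open Matrix ComplexOrder

private lemma wf_log_ineq {lam p t μ : ℝ} (hμ : 0 < μ) (hlam : 0 ≤ lam) (ht : 0 ≤ t)
    (hpdef : p = if 0 < lam then max (μ - 1/lam) 0 else 0) :
    Real.log (1 + t*lam) ≤ Real.log (1 + p*lam) + (1/μ) * (t - p) := by
  rcases eq_or_lt_of_le hlam with h0 | hpos
  · subst hpdef
    simp [← h0]
    positivity
  · rw [if_pos hpos] at hpdef
    rcases le_or_gt (μ - 1/lam) 0 with hc | hc
    · rw [hpdef, max_eq_right hc]
      have h1 : Real.log (1 + t*lam) ≤ t*lam := by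
        have := Real.log_le_sub_one_of_pos (x := 1 + t*lam) (by positivity)
        linarith
      have h2 : μ * lam ≤ 1 := by
        have hμl : μ ≤ 1/lam := by linarith
        calc μ * lam ≤ (1/lam) * lam := by nlinarith
          _ = 1 := by field_simp
      have hl : lam ≤ 1/μ := (le_div_iff₀ hμ).mpr (by nlinarith)
      have h3 : t * lam ≤ (1/μ) * t := by nlinarith
      simp only [mul_zero, zero_mul, add_zero, Real.log_one, sub_zero]
      linarith
    · rw [hpdef, max_eq_left hc.le]
      set q := μ - 1/lam with hq
      have hlamne : lam ≠ 0 := ne_of_gt hpos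
      have hkey : 1 + q * lam = μ * lam := by rw [hq, sub_mul, div_mul_cancel₀ 1 hlamne]; ring
      have hx : (0:ℝ) < (1 + t*lam)/(μ*lam) := by positivity
      have h1 : Real.log ((1 + t*lam)/(μ*lam)) = Real.log (1+t*lam) - Real.log (μ*lam) :=
        Real.log_div (by positivity) (by positivity)
      have h2 := Real.log_le_sub_one_of_pos hx
      have h3 : (1 + t*lam)/(μ*lam) - 1 = (1/μ) * (t - q) := by
        field_simp [hq]
        linear_combination hkey
      rw [hkey]
      linarith [h1 ▸ h2]

private lemma wf_prod_le {m : ℕ} (lam p t : Fin m → ℝ) (μ P : ℝ) (hμ : 0 < μ)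
    (hlam : ∀ i, 0 ≤ lam i) (ht : ∀ i, 0 ≤ t i)
    (hp : ∀ i, p i = if 0 < lam i then max (μ - 1/(lam i)) 0 else 0)
    (hpsum : ∑ i, p i = P) (htsum : ∑ i, t i ≤ P) :
    ∏ i, (1 + t i * lam i) ≤ ∏ i, (1 + p i * lam i) := by
  have hpn : ∀ i, 0 ≤ p i := by
    intro i; rw [hp i]; split <;> simp [le_max_right]
  have hfact : ∀ (q : Fin m → ℝ), (∀ i, 0 ≤ q i) → ∀ i, (0:ℝ) < 1 + q i * lam i := by
    intro q hq i; nlinarith [hq i, hlam i]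
  have key : ∑ i, Real.log (1 + t i * lam i) ≤ ∑ i, Real.log (1 + p i * lam i) := by
    calc ∑ i, Real.log (1 + t i * lam i)
        ≤ ∑ i, (Real.log (1 + p i * lam i) + (1/μ) * (t i - p i)) :=
          Finset.sum_le_sum (fun i _ => wf_log_ineq hμ (hlam i) (ht i) (hp i))
      _ = ∑ i, Real.log (1 + p i * lam i) + (1/μ) * ((∑ i, t i) - P) := by
          rw [Finset.sum_add_distrib, ← Finset.mul_sum, Finset.sum_sub_distrib, hpsum]
      _ ≤ ∑ i, Real.log (1 + p i * lam i) := by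
          have : (1/μ) * ((∑ i, t i) - P) ≤ 0 :=
            mul_nonpos_of_nonneg_of_nonpos (by positivity) (by linarith)
          linarith
  calc ∏ i, (1 + t i * lam i) = Real.exp (∑ i, Real.log (1 + t i * lam i)) := by
        rw [Real.exp_sum]
        exact Finset.prod_congr rfl (fun i _ => (Real.exp_log (hfact t ht i)).symm)
    _ ≤ Real.exp (∑ i, Real.log (1 + p i * lam i)) := Real.exp_le_exp.mpr key
    _ = ∏ i, (1 + p i * lam i) := by
        rw [Real.exp_sum]
        exact Finset.prod_congr rfl (fun i _ => Real.exp_log (hfact p hpn i))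

private lemma trace_eq_sum_eigen {n : ℕ} {A : Matrix (Fin n) (Fin n) ℂ} (hA : A.IsHermitian) :
    A.trace = ∑ i, (hA.eigenvalues i : ℂ) := by
  conv_lhs => rw [hA.spectral_theorem]
  rw [Unitary.conjStarAlgAut_apply]
  rw [trace_mul_cycle]
  have h1 : (star (hA.eigenvectorUnitary : Matrix (Fin n) (Fin n) ℂ)) *
      (hA.eigenvectorUnitary : Matrix (Fin n) (Fin n) ℂ) = 1 := by
    simp
  rw [h1, one_mul, trace_diagonal]
  rfl

/-- Hadamard's inequality (real-part form) for positive definite complex matrices. -/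
private lemma hadamard_posDef {n : ℕ} {M : Matrix (Fin n) (Fin n) ℂ} (hM : M.PosDef) :
    M.det.re ≤ ∏ i, (M i i).re := by
  have hdiag : ∀ i, 0 < (M i i).re := by
    intro i
    have := hM.re_dotProduct_pos (x := Pi.single i 1) (by
      intro h; simpa using congrFun h i)
    simpa [dotProduct, mulVec, Pi.single_apply, Finset.sum_ite_eq, Finset.mul_sum] using this
  set d : Fin n → ℝ := fun i => (M i i).re with hd
  set E : Matrix (Fin n) (Fin n) ℂ := diagonal (fun i => ((Real.sqrt (d i))⁻¹ : ℂ)) with hE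
  have hsqrtpos : ∀ i, 0 < Real.sqrt (d i) := fun i => Real.sqrt_pos.mpr (hdiag i)
  have hEherm : Eᴴ = E := by
    ext i j
    by_cases h : i = j <;>
      simp [hE, conjTranspose_apply, diagonal_apply, h, eq_comm, Complex.conj_ofReal]
  set Nm : Matrix (Fin n) (Fin n) ℂ := E * M * E with hNm
  have hN : Nm.PosDef := by
    refine posDef_iff_dotProduct_mulVec.mpr ⟨?_, ?_⟩
    · show Nmᴴ = Nm
      rw [hNm, conjTranspose_mul, conjTranspose_mul, hEherm, hM.1.eq]
      rw [mul_assoc]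
    · intro x hx
      have hz : E *ᵥ x ≠ 0 := by
        intro h
        apply hx
        funext i
        have h2 := congrFun h i
        rw [hE, mulVec_diagonal] at h2
        have h3 : ((Real.sqrt (d i) : ℂ))⁻¹ ≠ 0 := by
          simp [Complex.ofReal_ne_zero, (hsqrtpos i).ne']
        simpa [h3] using h2
      have hquad : star x ⬝ᵥ (Nm *ᵥ x) = star (E *ᵥ x) ⬝ᵥ (M *ᵥ (E *ᵥ x)) := by
        rw [hNm, ← mulVec_mulVec, ← mulVec_mulVec]
        rw [dotProduct_mulVec (star x) E]
        rw [show star x ᵥ* E = star (E *ᵥ x) by rw [star_mulVec, hEherm]]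
      rw [hquad]
      exact hM.dotProduct_mulVec_pos hz
  -- diagonal entries of N are 1
  have hNentry : ∀ i, Nm i i = (((Real.sqrt (d i))⁻¹ : ℝ) : ℂ) * M i i
      * (((Real.sqrt (d i))⁻¹ : ℝ) : ℂ) := by
    intro i
    rw [hNm, hE, mul_diagonal, diagonal_mul]
    push_cast
    ring
  have hNdiag : ∀ i, (Nm i i).re = 1 := by
    intro i
    rw [hNentry i]
    have hre : ((((Real.sqrt (d i))⁻¹ : ℝ) : ℂ) * M i i
        * (((Real.sqrt (d i))⁻¹ : ℝ) : ℂ)).re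
        = (Real.sqrt (d i))⁻¹ * (M i i).re * (Real.sqrt (d i))⁻¹ := by
      simp [Complex.mul_re]
    rw [hre]
    have hs : Real.sqrt (d i) * Real.sqrt (d i) = d i := Real.mul_self_sqrt (hdiag i).le
    rw [show (Real.sqrt (d i))⁻¹ * (M i i).re * (Real.sqrt (d i))⁻¹
        = (M i i).re / (Real.sqrt (d i) * Real.sqrt (d i)) by ring]
    rw [hs]
    exact div_self (ne_of_gt (hdiag i))
  -- eigenvalues of N
  have hev : ∀ i, 0 < hN.1.eigenvalues i := fun i => hN.eigenvalues_pos i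
  have hsum : ∑ i, hN.1.eigenvalues i = (n : ℝ) := by
    have h1 := congrArg Complex.re (trace_eq_sum_eigen hN.1)
    rw [← Complex.ofReal_sum] at h1
    rw [Complex.ofReal_re] at h1
    rw [← h1]
    have : Nm.trace = ∑ i, Nm i i := rfl
    rw [this, Complex.re_sum]
    simp [hNdiag]
  have hdet : Nm.det.re = ∏ i, hN.1.eigenvalues i := by
    rw [hN.1.det_eq_prod_eigenvalues]
    norm_cast
  have hprodle : ∏ i, hN.1.eigenvalues i ≤ 1 := by
    calc ∏ i, hN.1.eigenvalues i ≤ ∏ i, Real.exp (hN.1.eigenvalues i - 1) := by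
          apply Finset.prod_le_prod (fun i _ => (hev i).le)
          intro i _
          linarith [Real.add_one_le_exp (hN.1.eigenvalues i - 1)]
      _ = Real.exp (∑ i, (hN.1.eigenvalues i - 1)) := (Real.exp_sum _ _).symm
      _ = 1 := by
          rw [Finset.sum_sub_distrib, hsum]
          simp
  -- relate det N and det M
  set c : ℝ := ∏ i, (Real.sqrt (d i))⁻¹ with hc
  have hcpos : 0 < c := Finset.prod_pos (fun i _ => inv_pos.mpr (hsqrtpos i))
  have hdetE : E.det = (c : ℂ) := by
    rw [hE, det_diagonal, hc]
    norm_cast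
  have hdetN : Nm.det = (c : ℂ) * M.det * (c : ℂ) := by
    rw [hNm, det_mul, det_mul, hdetE]
  have hdetNre : Nm.det.re = c * M.det.re * c := by
    rw [hdetN]
    simp [Complex.mul_re]
  have hcc : c * c = (∏ i, d i)⁻¹ := by
    rw [hc, ← Finset.prod_mul_distrib, ← Finset.prod_inv_distrib]
    exact Finset.prod_congr rfl (fun i _ => by
      rw [← mul_inv, Real.mul_self_sqrt (hdiag i).le])
  have hprodd : 0 < ∏ i, d i := Finset.prod_pos (fun i _ => hdiag i)
  have hfin : (∏ i, d i)⁻¹ * M.det.re ≤ 1 := by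
    calc (∏ i, d i)⁻¹ * M.det.re = c * M.det.re * c := by rw [← hcc]; ring
      _ = Nm.det.re := hdetNre.symm
      _ = ∏ i, hN.1.eigenvalues i := hdet
      _ ≤ 1 := hprodle
  calc M.det.re = (∏ i, d i) * ((∏ i, d i)⁻¹ * M.det.re) := by
        field_simp
    _ ≤ (∏ i, d i) * 1 := by
        exact mul_le_mul_of_nonneg_left hfin hprodd.le
    _ = ∏ i, (M i i).re := by rw [mul_one]
/-- Converse part of Proposition 2: among all positive semidefinite input covariance
matrices `S` with `trace S ≤ P`, the objective `det (1 + G * S * Gᴴ)` is bounded by the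
water-filling value `∏ i, (1 + p i * lam i)`, where `lam` are the eigenvalues of
`Gᴴ * G` in non-increasing order and `p` is the water-filling allocation with water
level `μ`. -/
theorem det_le_waterfilling_bound
    (N m : ℕ) (hm : 1 ≤ m) (hNm : m ≤ N)
    (G : Matrix (Fin N) (Fin m) ℂ)
    (hG : (Gᴴ * G).IsHermitian)
    (lam : Fin m → ℝ)
    (hmono : ∀ i j : Fin m, i ≤ j → lam j ≤ lam i)
    (hnonneg : ∀ i, 0 ≤ lam i)
    (heig : ∃ e : Fin m ≃ Fin m, ∀ i, lam i = hG.eigenvalues (e i))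
    (hlam1 : 0 < lam ⟨0, hm⟩)
    (P μ : ℝ) (hP : 0 < P) (hμ : 0 < μ)
    (p : Fin m → ℝ)
    (hp : ∀ i, p i = if 0 < lam i then max (μ - 1 / lam i) 0 else 0)
    (hpsum : ∑ i, p i = P)
    (S : Matrix (Fin m) (Fin m) ℂ) (hS : S.PosSemidef)
    (htr : S.trace.re ≤ P) :
    (1 + G * S * Gᴴ).det.re ≤ ∏ i, (1 + p i * lam i) := by
  obtain ⟨e, he⟩ := heig
  set V : Matrix (Fin m) (Fin m) ℂ := (hG.eigenvectorUnitary : Matrix (Fin m) (Fin m) ℂ)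
    with hV
  set ev : Fin m → ℝ := hG.eigenvalues with hev
  have hVsV : star V * V = 1 := by simp [hV]
  have hVVs : V * star V = 1 := mul_eq_one_comm.mp hVsV
  set D0 : Matrix (Fin m) (Fin m) ℂ := diagonal (RCLike.ofReal ∘ ev) with hD0
  have hspec : Gᴴ * G = V * D0 * star V := hG.spectral_theorem
  have hevnn : ∀ i, 0 ≤ ev i := fun i =>
    (posSemidef_conjTranspose_mul_self G).eigenvalues_nonneg i
  set T : Matrix (Fin m) (Fin m) ℂ := star V * S * V with hT
  have hTpsd : T.PosSemidef := by
    simpa [hT, star_eq_conjTranspose] using hS.conjTranspose_mul_mul_same V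
  -- diagonal entries of T
  set t : Fin m → ℝ := fun i => (T i i).re with ht
  have ht0 : ∀ i, 0 ≤ t i := by
    intro i
    have := hTpsd.re_dotProduct_nonneg (Pi.single i 1)
    simpa [dotProduct, mulVec, Pi.single_apply, Finset.sum_ite_eq, Finset.mul_sum] using this
  have htsum : ∑ i, t i ≤ P := by
    have htrT : T.trace = S.trace := by
      rw [hT, trace_mul_cycle, hVVs, one_mul]
    have : ∑ i, t i = T.trace.re := by
      rw [show T.trace = ∑ i, T i i from rfl, Complex.re_sum]
    rw [this, htrT]
    exact htr
  -- square root of D0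
  set R : Matrix (Fin m) (Fin m) ℂ := diagonal (fun i => (Real.sqrt (ev i) : ℂ)) with hR
  have hRherm : Rᴴ = R := by
    ext i j
    by_cases h : i = j <;>
      simp [hR, conjTranspose_apply, diagonal_apply, h, eq_comm, Complex.conj_ofReal]
  have hD0RR : D0 = R * R := by
    rw [hR, hD0, diagonal_mul_diagonal]
    ext i j
    rcases eq_or_ne i j with h | h
    · subst h
      simp [diagonal_apply_eq, ← Complex.ofReal_mul, Real.mul_self_sqrt (hevnn i)]
    · simp [diagonal_apply_ne _ h]
  -- determinant chain
  have hdetchain : (1 + G * S * Gᴴ).det = (1 + R * T * R).det := by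
    calc (1 + G * S * Gᴴ).det = (1 + G * (S * Gᴴ)).det := by rw [Matrix.mul_assoc]
      _ = (1 + (S * Gᴴ) * G).det := det_one_add_mul_comm _ _
      _ = (1 + (S * V * D0) * star V).det := by
          rw [Matrix.mul_assoc S Gᴴ G, hspec, ← Matrix.mul_assoc, ← Matrix.mul_assoc]
      _ = (1 + star V * (S * V * D0)).det := det_one_add_mul_comm _ _
      _ = (1 + (T * R) * R).det := by
          rw [hT, hD0RR]
          simp only [Matrix.mul_assoc]
      _ = (1 + R * (T * R)).det := det_one_add_mul_comm _ _
      _ = (1 + R * T * R).det := by rw [← Matrix.mul_assoc]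
  -- the matrix 1 + R T R is positive definite
  set Mm : Matrix (Fin m) (Fin m) ℂ := 1 + R * T * R with hMm
  have hRTR : (R * T * R).PosSemidef := by
    have := hTpsd.conjTranspose_mul_mul_same R
    rwa [hRherm] at this
  have hMpd : Mm.PosDef := Matrix.PosDef.one.add_posSemidef hRTR
  -- diagonal entries
  have hMdiag : ∀ i, (Mm i i).re = 1 + ev i * t i := by
    intro i
    have h1 : Mm i i = 1 + ((Real.sqrt (ev i) : ℝ) : ℂ) * T i i
        * ((Real.sqrt (ev i) : ℝ) : ℂ) := by
      rw [hMm, Matrix.add_apply, Matrix.one_apply_eq]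
      congr 1
      rw [hR, mul_diagonal, diagonal_mul]
    rw [h1]
    have : (((Real.sqrt (ev i) : ℝ) : ℂ) * T i i * ((Real.sqrt (ev i) : ℝ) : ℂ)).re
        = Real.sqrt (ev i) * Real.sqrt (ev i) * t i := by
      simp [Complex.mul_re]
      ring
    rw [Complex.add_re, Complex.one_re, this, Real.mul_self_sqrt (hevnn i)]
  -- apply Hadamard
  have hHad : Mm.det.re ≤ ∏ i, (1 + ev i * t i) := by
    calc Mm.det.re ≤ ∏ i, (Mm i i).re := hadamard_posDef hMpd
      _ = ∏ i, (1 + ev i * t i) := Finset.prod_congr rfl (fun i _ => hMdiag i)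
  -- water-filling bound
  have hwf : ∏ i, (1 + t i * ev i) ≤ ∏ i, (1 + (p (e.symm i)) * ev i) := by
    apply wf_prod_le ev (fun i => p (e.symm i)) t μ P hμ hevnn ht0
    · intro i
      rw [hp (e.symm i), he (e.symm i), Equiv.apply_symm_apply]
    · rw [Equiv.sum_comp e.symm p, hpsum]
    · exact htsum
  have hfinal : ∏ i, (1 + (p (e.symm i)) * ev i) = ∏ i, (1 + p i * lam i) := by
    rw [← Equiv.prod_comp e (fun i => 1 + p (e.symm i) * ev i)]
    exact Finset.prod_congr rfl (fun i _ => by rw [Equiv.symm_apply_apply, ← he])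
  calc (1 + G * S * Gᴴ).det.re = Mm.det.re := by rw [hdetchain, hMm]
    _ ≤ ∏ i, (1 + ev i * t i) := hHad
    _ = ∏ i, (1 + t i * ev i) := Finset.prod_congr rfl (fun i _ => by ring)
    _ ≤ ∏ i, (1 + (p (e.symm i)) * ev i) := hwf
    _ = ∏ i, (1 + p i * lam i) := hfinal
end

section
/- Consider the interference channel of Proposition 2: let N < M ≤ 2N be positive integers, let H₂₁ ∈ ℂ^{N×M} have rank N (so dim ker(H₂₁) = M − N), let H₁₂, H₂₂ ∈ ℂ^{N×M}, let σ > 0, and let D₁ ∈ ℂ^{M×M} be a diagonal positive semidefinite matrix (the primary input covariance). Define the Hermitian positive definite matrix S_ξ = H₁₂ D₁ H₁₂ᴴ + σ² I_N, let W ∈ ℂ^{M×(M−N)} be any matrix with orthonormal columns spanning ker(H₂₁), let G = S_ξ^{−1/2} H₂₂ W, let λ_1 ≥ … ≥ λ_{M−N} ≥ 0 be the eigenvalues of Gᴴ G with λ_1 > 0, let P > 0, and let p_i = max(μ − 1/λ_i, 0) (with p_i = 0 when λ_i = 0) be the water-filling allocation with μ > 0 chosen so that Σ_i p_i = P. Then: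 (i) for every M × M Hermitian positive semidefinite matrix S₂ with H₂₁ S₂ = 0 and trace(S₂) ≤ P, one has det( I_N + S_ξ^{−1/2} H₂₂ S₂ H₂₂ᴴ S_ξ^{−1/2} ) ≤ Π_{i=1}^{M−N} (1 + p_i λ_i); and (ii) there exists a semi-unitary matrix Z* ∈ ℂ^{M×(M−N)} (satisfying Z*ᴴ Z* = I_{M−N}) with H₂₁ Z* = 0 such that S₂* = Z* diag(p_1,…,p_{M−N}) Z*ᴴ satisfies trace(S₂*) ≤ P and attains equality in (i). Hence a semi-unitary null-space precoder is optimal for the spectral efficiency of the secondary link under the interference cancellation constraint. -/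
open Matrix ComplexOrder

private lemma diag_re_nonneg' {n : ℕ} {A : Matrix (Fin n) (Fin n) ℂ} (hA : A.PosSemidef)
    (i : Fin n) : 0 ≤ (A i i).re := by
  have h := hA.re_dotProduct_nonneg (Pi.single i 1)
  simpa [dotProduct, mulVec, Pi.single_apply, Finset.mul_sum] using h

private lemma diag_re_pos' {n : ℕ} {A : Matrix (Fin n) (Fin n) ℂ} (hA : A.PosDef)
    (i : Fin n) : 0 < (A i i).re := by
  have h := hA.re_dotProduct_pos (x := Pi.single i 1) (by
    intro h; simpa using congrFun h i)
  simpa [dotProduct, mulVec, Pi.single_apply, Finset.mul_sum] using h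

private lemma amgm_prod_le_one {k : ℕ} (ν : Fin k → ℝ) (h0 : ∀ i, 0 ≤ ν i)
    (hs : ∑ i, ν i = k) : ∏ i, ν i ≤ 1 := by
  rcases Nat.eq_zero_or_pos k with hk | hk
  · subst hk; simp
  have hk0 : (k : ℝ) ≠ 0 := Nat.cast_ne_zero.mpr hk.ne'
  have hw : ∑ _i : Fin k, (1 / k : ℝ) = 1 := by
    simp [Finset.sum_const]
    field_simp
  have h := Real.geom_mean_le_arith_mean_weighted Finset.univ (fun _ => (1 / k : ℝ)) ν
    (fun _ _ => by positivity) hw (fun i _ => h0 i)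
  have hrhs : ∑ i, (1 / k : ℝ) * ν i = 1 := by
    rw [← Finset.mul_sum, hs]; field_simp
  rw [hrhs] at h
  have hprod : ∏ i, ν i ^ ((1 : ℝ) / k) = (∏ i, ν i) ^ ((1 : ℝ) / k) :=
    Real.finset_prod_rpow Finset.univ ν (fun i _ => h0 i) _
  rw [hprod] at h
  have hP0 : 0 ≤ ∏ i, ν i := Finset.prod_nonneg (fun i _ => h0 i)
  have : (∏ i, ν i) = ((∏ i, ν i) ^ ((1 : ℝ) / k)) ^ (k : ℝ) := by
    rw [← Real.rpow_mul hP0, one_div_mul_cancel hk0, Real.rpow_one]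
  rw [this]
  calc ((∏ i, ν i) ^ ((1 : ℝ) / k)) ^ (k : ℝ) ≤ 1 ^ (k : ℝ) :=
        Real.rpow_le_rpow (Real.rpow_nonneg hP0 _) h (Nat.cast_nonneg k)
    _ = 1 := Real.one_rpow _

private lemma trace_eq_sum_eigenvalues' {n : ℕ} {B : Matrix (Fin n) (Fin n) ℂ}
    (hB : B.IsHermitian) : B.trace = ∑ j, (hB.eigenvalues j : ℂ) := by
  nth_rewrite 1 [hB.spectral_theorem, Unitary.conjStarAlgAut_apply]
  rw [Matrix.trace_mul_cycle]
  rw [show (star (hB.eigenvectorUnitary : Matrix (Fin n) (Fin n) ℂ)) *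
      (hB.eigenvectorUnitary : Matrix (Fin n) (Fin n) ℂ) = 1 from
    Matrix.UnitaryGroup.star_mul_self _]
  rw [one_mul, Matrix.trace_diagonal]
  rfl

private lemma hadamard_ineq {n : ℕ} (A : Matrix (Fin n) (Fin n) ℂ) (hA : A.PosDef) :
    A.det.re ≤ ∏ i, (A i i).re := by
  classical
  have hd : ∀ i, 0 < (A i i).re := diag_re_pos' hA
  set c : Fin n → ℝ := fun i => (Real.sqrt ((A i i).re))⁻¹ with hcdef
  have hc : ∀ i, 0 < c i := fun i => inv_pos.mpr (Real.sqrt_pos.mpr (hd i))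
  set D : Matrix (Fin n) (Fin n) ℂ := diagonal (fun i => (c i : ℂ)) with hDdef
  have hDh : Dᴴ = D := by
    rw [hDdef, Matrix.diagonal_conjTranspose]
    have : (star fun i => ((c i : ℝ) : ℂ)) = fun i => ((c i : ℝ) : ℂ) :=
      funext fun i => Complex.conj_ofReal _
    rw [this]
  set B := D * A * D with hBdef
  have hB : B.PosSemidef := by
    have := hA.posSemidef.mul_mul_conjTranspose_same D
    rwa [hDh] at this
  have hBii : ∀ i, (B i i).re = 1 := by
    intro i
    have : B i i = ((c i * c i : ℝ) : ℂ) * A i i := by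
      simp [hBdef, hDdef, Matrix.mul_diagonal, Matrix.diagonal_mul]
      ring
    rw [this, Complex.re_ofReal_mul, hcdef]
    show (Real.sqrt ((A i i).re))⁻¹ * (Real.sqrt ((A i i).re))⁻¹ * (A i i).re = 1
    rw [← mul_inv, Real.mul_self_sqrt (hd i).le]
    exact inv_mul_cancel₀ (hd i).ne'
  have htr : ∑ j, hB.1.eigenvalues j = n := by
    have h1 := trace_eq_sum_eigenvalues' hB.1
    have h2 : B.trace.re = ∑ j, hB.1.eigenvalues j := by
      rw [h1, Complex.re_sum]
      simp
    have h3 : B.trace.re = n := by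
      rw [Matrix.trace]
      rw [Complex.re_sum]
      simp only [Matrix.diag_apply]
      rw [Finset.sum_congr rfl (fun i _ => hBii i)]
      simp
    rw [← h2, h3]
  have hdetB : B.det.re = ∏ j, hB.1.eigenvalues j := by
    rw [hB.1.det_eq_prod_eigenvalues]
    norm_cast
  have hB1 : B.det.re ≤ 1 := by
    rw [hdetB]
    exact amgm_prod_le_one _ hB.eigenvalues_nonneg htr
  have hdetD : D.det = ((∏ i, c i : ℝ) : ℂ) := by
    rw [hDdef, Matrix.det_diagonal]
    norm_cast
  have hBA : B.det = (((∏ i, c i) * (∏ i, c i) : ℝ) : ℂ) * A.det := by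
    rw [hBdef, Matrix.det_mul, Matrix.det_mul, hdetD]
    push_cast
    ring
  have hr : (0:ℝ) < (∏ i, c i) * (∏ i, c i) := by
    have : 0 < ∏ i, c i := Finset.prod_pos (fun i _ => hc i)
    positivity
  have hAre : A.det.re = B.det.re * ((∏ i, c i) * (∏ i, c i))⁻¹ := by
    rw [hBA, Complex.re_ofReal_mul]
    field_simp
    rw [mul_div_assoc, div_self (Finset.prod_pos fun i _ => hc i).ne', mul_one]
  have hinv : ((∏ i, c i) * (∏ i, c i))⁻¹ = ∏ i, (A i i).re := by
    rw [← Finset.prod_mul_distrib, ← Finset.prod_inv_distrib]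
    refine Finset.prod_congr rfl (fun i _ => ?_)
    rw [hcdef]
    show ((Real.sqrt ((A i i).re))⁻¹ * (Real.sqrt ((A i i).re))⁻¹)⁻¹ = (A i i).re
    rw [← mul_inv, Real.mul_self_sqrt (hd i).le, inv_inv]
  rw [hAre, hinv]
  calc B.det.re * ∏ i, (A i i).re ≤ 1 * ∏ i, (A i i).re :=
        mul_le_mul_of_nonneg_right hB1 (Finset.prod_nonneg fun i _ => (hd i).le)
    _ = ∏ i, (A i i).re := one_mul _

private noncomputable def wfill (μ x : ℝ) : ℝ := if 0 < x then max (μ - 1 / x) 0 else 0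

private lemma wfill_nonneg (μ x : ℝ) : 0 ≤ wfill μ x := by
  unfold wfill; split
  · exact le_max_right _ _
  · exact le_refl 0

private lemma waterfill {k : ℕ} (μ : ℝ) (hμ : 0 < μ) (m q : Fin k → ℝ)
    (hm : ∀ i, 0 ≤ m i) (hq : ∀ i, 0 ≤ q i)
    (hsum : ∑ i, q i ≤ ∑ i, wfill μ (m i)) :
    ∏ i, (1 + m i * q i) ≤ ∏ i, (1 + wfill μ (m i) * m i) := by
  set p := fun i => wfill μ (m i) with hpdef
  have hp0 : ∀ i, 0 ≤ p i := fun i => wfill_nonneg _ _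
  have hden : ∀ i, 0 < 1 + p i * m i := fun i => by
    have := mul_nonneg (hp0 i) (hm i); linarith
  have hqq : ∀ i, 0 < 1 + m i * q i := fun i => by
    have := mul_nonneg (hm i) (hq i); linarith
  have key : ∀ i, Real.log (1 + m i * q i) ≤
      Real.log (1 + p i * m i) + (q i - p i) * (1 / μ) := by
    intro i
    have hlog := Real.log_le_sub_one_of_pos (div_pos (hqq i) (hden i))
    rw [Real.log_div (hqq i).ne' (hden i).ne'] at hlog
    have hfrac : (1 + m i * q i) / (1 + p i * m i) - 1
        = (q i - p i) * (m i / (1 + p i * m i)) := by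
      rw [div_sub_one (hden i).ne', mul_div_assoc']
      congr 1
      ring
    rw [hfrac] at hlog
    have hcoef : (q i - p i) * (m i / (1 + p i * m i)) ≤ (q i - p i) * (1 / μ) := by
      by_cases hpi : p i = 0
      · rw [hpi]
        have hmle : m i ≤ 1 / μ := by
          rcases eq_or_lt_of_le (hm i) with h0 | h0
          · rw [← h0]; positivity
          · have hz : wfill μ (m i) = 0 := hpi
            unfold wfill at hz
            rw [if_pos h0] at hz
            have hle : μ - 1 / m i ≤ 0 := by
              by_contra hcon
              push_neg at hcon
              rw [max_eq_left hcon.le] at hz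
              linarith
            have hμm : μ ≤ 1 / m i := by linarith
            rw [le_div_iff₀ hμ]
            have := (le_div_iff₀ h0).mp hμm
            nlinarith
        have : m i / (1 + 0 * m i) = m i := by simp
        rw [this]
        simp only [sub_zero]
        exact mul_le_mul_of_nonneg_left hmle (hq i)
      · have hpi' : 0 < p i := lt_of_le_of_ne (hp0 i) (Ne.symm hpi)
        have hmi : 0 < m i := by
          by_contra hcon
          push_neg at hcon
          have : p i = 0 := by
            simp only [hpdef, wfill]; rw [if_neg (not_lt.mpr hcon)]
          exact hpi this
        have hpeq : p i = μ - 1 / m i := by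
          have : p i = max (μ - 1 / m i) 0 := by
            simp only [hpdef, wfill]; rw [if_pos hmi]
          rcases max_cases (μ - 1 / m i) 0 with ⟨h1, _⟩ | ⟨h1, _⟩
          · rw [this, h1]
          · rw [this, h1] at hpi'; exact absurd hpi' (lt_irrefl 0)
        have hmm : 1 + p i * m i = μ * m i := by
          rw [hpeq]; field_simp
          ring
        rw [hmm]
        have : m i / (μ * m i) = 1 / μ := by
          field_simp
        rw [this]
    linarith
  have hsumlog : ∑ i, Real.log (1 + m i * q i) ≤ ∑ i, Real.log (1 + p i * m i) := by
    calc ∑ i, Real.log (1 + m i * q i)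
        ≤ ∑ i, (Real.log (1 + p i * m i) + (q i - p i) * (1 / μ)) :=
          Finset.sum_le_sum fun i _ => key i
      _ = ∑ i, Real.log (1 + p i * m i) + (∑ i, q i - ∑ i, p i) * (1 / μ) := by
          rw [Finset.sum_add_distrib, ← Finset.sum_mul, Finset.sum_sub_distrib]
      _ ≤ ∑ i, Real.log (1 + p i * m i) := by
          have : (∑ i, q i - ∑ i, p i) * (1 / μ) ≤ 0 :=
            mul_nonpos_of_nonpos_of_nonneg (by rw [hpdef] at *; linarith) (by positivity)
          linarith
  have l1 : ∏ i, (1 + m i * q i) = Real.exp (∑ i, Real.log (1 + m i * q i)) := by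
    rw [Real.exp_sum]
    exact Finset.prod_congr rfl fun i _ => (Real.exp_log (hqq i)).symm
  have l2 : ∏ i, (1 + p i * m i) = Real.exp (∑ i, Real.log (1 + p i * m i)) := by
    rw [Real.exp_sum]
    exact Finset.prod_congr rfl fun i _ => (Real.exp_log (hden i)).symm
  rw [l1, l2]
  exact Real.exp_le_exp.mpr hsumlog

/-- Proposition 2 (optimal interference cancellation precoder): in the cognitive
interference channel with `N < M ≤ 2N`, `H21` of full rank `N`, interference-plus-noise
covariance `Sξ = H12 * D1 * H12ᴴ + σ² • 1` with positive definite square root `Ssq`,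
null-space basis `W` of `H21` with orthonormal columns, effective channel
`G = Ssq⁻¹ * H22 * W` with ordered eigenvalues `lam` of `Gᴴ * G`, and water-filling
powers `p` summing to `P`:
(i) every positive semidefinite covariance `S2` with `H21 * S2 = 0` and `trace S2 ≤ P`
satisfies `det (1 + Ssq⁻¹ * H22 * S2 * H22ᴴ * Ssq⁻¹) ≤ ∏ i, (1 + p i * lam i)`; and
(ii) there is a semi-unitary `Z` (`Zᴴ * Z = 1`) with `H21 * Z = 0` whose induced
covariance `Z * diag p * Zᴴ` meets the power constraint and attains the bound. -/
theorem semi_unitary_null_space_precoder_optimal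
    (N M : ℕ) (hNM : N < M) (hM2N : M ≤ 2 * N)
    (H21 H12 H22 : Matrix (Fin N) (Fin M) ℂ)
    (hrank : H21.rank = N)
    (σ : ℝ) (hσ : 0 < σ)
    (d1 : Fin M → ℝ) (hd1 : ∀ i, 0 ≤ d1 i)
    (Sξ : Matrix (Fin N) (Fin N) ℂ)
    (hSξ : Sξ = H12 * Matrix.diagonal (fun i => (d1 i : ℂ)) * H12ᴴ + ((σ : ℂ) ^ 2) • 1)
    (Ssq : Matrix (Fin N) (Fin N) ℂ)
    (hSsq : Ssq.PosDef) (hSsq2 : Ssq * Ssq = Sξ)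
    (W : Matrix (Fin M) (Fin (M - N)) ℂ)
    (hW : Wᴴ * W = 1)
    (hWspan : LinearMap.range W.mulVecLin = LinearMap.ker H21.mulVecLin)
    (G : Matrix (Fin N) (Fin (M - N)) ℂ)
    (hGdef : G = Ssq⁻¹ * H22 * W)
    (hG : (Gᴴ * G).IsHermitian)
    (lam : Fin (M - N) → ℝ)
    (hmono : ∀ i j : Fin (M - N), i ≤ j → lam j ≤ lam i)
    (hnonneg : ∀ i, 0 ≤ lam i)
    (heig : ∃ e : Fin (M - N) ≃ Fin (M - N), ∀ i, lam i = hG.eigenvalues (e i))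
    (hlam1 : 0 < lam ⟨0, Nat.sub_pos_of_lt hNM⟩)
    (P μ : ℝ) (hP : 0 < P) (hμ : 0 < μ)
    (p : Fin (M - N) → ℝ)
    (hp : ∀ i, p i = if 0 < lam i then max (μ - 1 / lam i) 0 else 0)
    (hpsum : ∑ i, p i = P) :
    (∀ S2 : Matrix (Fin M) (Fin M) ℂ, S2.PosSemidef → H21 * S2 = 0 →
        S2.trace.re ≤ P →
        (1 + Ssq⁻¹ * H22 * S2 * H22ᴴ * Ssq⁻¹).det.re ≤ ∏ i, (1 + p i * lam i)) ∧
    ∃ Z : Matrix (Fin M) (Fin (M - N)) ℂ, Zᴴ * Z = 1 ∧ H21 * Z = 0 ∧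
      (Z * Matrix.diagonal (fun i => (p i : ℂ)) * Zᴴ).trace.re ≤ P ∧
      (1 + Ssq⁻¹ * H22 * (Z * Matrix.diagonal (fun i => (p i : ℂ)) * Zᴴ) * H22ᴴ *
          Ssq⁻¹).det.re = ∏ i, (1 + p i * lam i) := by
  classical
  obtain ⟨e, he⟩ := heig
  set ev : Fin (M - N) → ℝ := hG.eigenvalues with hevdef
  have hGGpsd : (Gᴴ * G).PosSemidef := Matrix.posSemidef_conjTranspose_mul_self G
  have hevnn : ∀ j, 0 ≤ ev j := fun j => hGGpsd.eigenvalues_nonneg j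
  set U : Matrix (Fin (M - N)) (Fin (M - N)) ℂ :=
    (hG.eigenvectorUnitary : Matrix (Fin (M - N)) (Fin (M - N)) ℂ) with hUdef
  have hU1 : Uᴴ * U = 1 := by
    rw [hUdef, ← Matrix.star_eq_conjTranspose]
    exact Matrix.UnitaryGroup.star_mul_self _
  have hU2 : U * Uᴴ = 1 := by
    rw [hUdef, ← Matrix.star_eq_conjTranspose]
    exact Matrix.mem_unitaryGroup_iff.mp hG.eigenvectorUnitary.2
  have hspec : Uᴴ * (Gᴴ * G) * U = Matrix.diagonal (fun j => ((ev j : ℝ) : ℂ)) := by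
    rw [hUdef, ← Matrix.star_eq_conjTranspose]
    have h := hG.conjStarAlgAut_star_eigenvectorUnitary
    rw [Unitary.conjStarAlgAut_apply, Unitary.coe_star, star_star] at h
    exact h
  have hspec2 : Gᴴ * G = U * Matrix.diagonal (fun j => ((ev j : ℝ) : ℂ)) * Uᴴ := by
    rw [hUdef, ← Matrix.star_eq_conjTranspose]
    exact hG.spectral_theorem
  have hH21W : H21 * W = 0 := by
    ext i j
    have hmem : W *ᵥ Pi.single j 1 ∈ LinearMap.range W.mulVecLin := ⟨Pi.single j 1, rfl⟩
    rw [hWspan, LinearMap.mem_ker, Matrix.mulVecLin_apply] at hmem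
    have hv : (H21 * W) *ᵥ Pi.single j 1 = 0 := by
      rw [← Matrix.mulVec_mulVec, hmem]
    have := congrFun hv i
    rw [Matrix.mulVec_single] at this
    simpa using this
  have hSsqinv : (Ssq⁻¹)ᴴ = Ssq⁻¹ := by
    rw [Matrix.conjTranspose_nonsing_inv, hSsq.isHermitian.eq]
  have hGH : Gᴴ = Wᴴ * H22ᴴ * Ssq⁻¹ := by
    rw [hGdef, Matrix.conjTranspose_mul, Matrix.conjTranspose_mul, hSsqinv, Matrix.mul_assoc]
  have hpw : ∀ i, p i = wfill μ (lam i) := fun i => by rw [hp i]; rfl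
  have hpnn : ∀ i, 0 ≤ p i := fun i => by
    rw [hp i]; split
    · exact le_max_right _ _
    · exact le_refl 0
  constructor
  · -- part (i)
    intro S2 hS2 hH21S2 htr
    have hWWS2 : W * Wᴴ * S2 = S2 := by
      ext i j
      have hmem : S2 *ᵥ Pi.single j 1 ∈ LinearMap.ker H21.mulVecLin := by
        rw [LinearMap.mem_ker, Matrix.mulVecLin_apply, Matrix.mulVec_mulVec, hH21S2,
          Matrix.zero_mulVec]
      rw [← hWspan] at hmem
      obtain ⟨u, hu⟩ := hmem
      have hu' : W *ᵥ u = S2 *ᵥ Pi.single j 1 := hu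
      have hv : (W * Wᴴ * S2) *ᵥ Pi.single j 1 = S2 *ᵥ Pi.single j 1 := by
        calc (W * Wᴴ * S2) *ᵥ Pi.single j 1 = (W * Wᴴ) *ᵥ (S2 *ᵥ Pi.single j 1) := by
              rw [Matrix.mulVec_mulVec]
          _ = (W * Wᴴ) *ᵥ (W *ᵥ u) := by rw [hu']
          _ = (W * Wᴴ * W) *ᵥ u := by rw [Matrix.mulVec_mulVec]
          _ = W *ᵥ u := by rw [Matrix.mul_assoc, hW, Matrix.mul_one]
          _ = S2 *ᵥ Pi.single j 1 := hu'
      have := congrFun hv i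
      rw [Matrix.mulVec_single, Matrix.mulVec_single] at this
      simpa using this
    have hS2WW : S2 * (W * Wᴴ) = S2 := by
      have h := congrArg Matrix.conjTranspose hWWS2
      rw [Matrix.conjTranspose_mul, Matrix.conjTranspose_mul, Matrix.conjTranspose_conjTranspose,
        hS2.1.eq] at h
      exact h
    have hfact : W * (Wᴴ * S2 * W) * Wᴴ = S2 := by
      calc W * (Wᴴ * S2 * W) * Wᴴ = (W * Wᴴ * S2) * (W * Wᴴ) := by
            simp only [Matrix.mul_assoc]
        _ = S2 * (W * Wᴴ) := by rw [hWWS2]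
        _ = S2 := hS2WW
    set Q : Matrix (Fin (M - N)) (Fin (M - N)) ℂ := Wᴴ * S2 * W with hQdef
    have hQ : Q.PosSemidef := hS2.conjTranspose_mul_mul_same W
    have htrQ : Q.trace = S2.trace := by
      rw [hQdef, Matrix.trace_mul_cycle, hWWS2]
    set R : Matrix (Fin (M - N)) (Fin (M - N)) ℂ := Uᴴ * Q * U with hRdef
    have hR : R.PosSemidef := hQ.conjTranspose_mul_mul_same U
    have htrR : R.trace = Q.trace := by
      rw [hRdef, Matrix.trace_mul_cycle, ← Matrix.mul_assoc, hU2, Matrix.one_mul]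
    -- determinant chain
    set Λ : Matrix (Fin (M - N)) (Fin (M - N)) ℂ :=
      Matrix.diagonal (fun j => ((ev j : ℝ) : ℂ)) with hΛdef
    set Λh : Matrix (Fin (M - N)) (Fin (M - N)) ℂ :=
      Matrix.diagonal (fun j => ((Real.sqrt (ev j) : ℝ) : ℂ)) with hΛhdef
    have hΛhh : Λhᴴ = Λh := by
      rw [hΛhdef, Matrix.diagonal_conjTranspose]
      have : (star fun j => ((Real.sqrt (ev j) : ℝ) : ℂ)) =
          fun j => ((Real.sqrt (ev j) : ℝ) : ℂ) := funext fun j => Complex.conj_ofReal _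
      rw [this]
    have hΛsq : Λh * Λh = Λ := by
      rw [hΛhdef, hΛdef, Matrix.diagonal_mul_diagonal]
      exact congrArg Matrix.diagonal (funext fun j => by
        rw [← Complex.ofReal_mul, Real.mul_self_sqrt (hevnn j)])
    set T : Matrix (Fin (M - N)) (Fin (M - N)) ℂ := Λh * R * Λh with hTdef
    have hT : T.PosSemidef := by
      have := hR.conjTranspose_mul_mul_same Λh
      rwa [hΛhh] at this
    have hdetchain : (1 + Ssq⁻¹ * H22 * S2 * H22ᴴ * Ssq⁻¹).det = (1 + T).det := by
      have h1 : 1 + Ssq⁻¹ * H22 * S2 * H22ᴴ * Ssq⁻¹ = 1 + G * (Q * Gᴴ) := by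
        conv_lhs => rw [← hfact]
        rw [hGH, hGdef, hQdef]
        simp only [Matrix.mul_assoc]
      rw [h1, Matrix.det_one_add_mul_comm]
      have h2 : 1 + Q * Gᴴ * G = 1 + Q * (U * Λ * Uᴴ) := by
        rw [Matrix.mul_assoc, hspec2, hΛdef]
      rw [h2]
      have h3 : Q * (U * Λ * Uᴴ) = (Q * U * Λ) * Uᴴ := by simp only [Matrix.mul_assoc]
      rw [h3, Matrix.det_one_add_mul_comm]
      have h4 : 1 + Uᴴ * (Q * U * Λ) = 1 + R * Λ := by
        rw [hRdef]; simp only [Matrix.mul_assoc]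
      rw [h4, ← hΛsq]
      have h5 : R * (Λh * Λh) = (R * Λh) * Λh := by simp only [Matrix.mul_assoc]
      rw [h5, Matrix.det_one_add_mul_comm]
      rw [hTdef]
      simp only [Matrix.mul_assoc]
    have hPD : (1 + T).PosDef := Matrix.PosDef.add_posSemidef Matrix.PosDef.one hT
    have hHad := hadamard_ineq (1 + T) hPD
    rw [hdetchain]
    have hTii : ∀ i, ((1 + T) i i).re = 1 + ev i * (R i i).re := by
      intro i
      have h1 : T i i = ((Real.sqrt (ev i) * Real.sqrt (ev i) : ℝ) : ℂ) * R i i := by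
        rw [hTdef, hΛhdef, Matrix.mul_diagonal, Matrix.diagonal_mul]
        push_cast
        ring
      rw [Matrix.add_apply, Matrix.one_apply_eq, Complex.add_re, Complex.one_re, h1,
        Complex.re_ofReal_mul, Real.mul_self_sqrt (hevnn i)]
    have hqnn : ∀ i, 0 ≤ (R i i).re := diag_re_nonneg' hR
    have hsumq : ∑ i, (R i i).re ≤ ∑ j, wfill μ (ev j) := by
      have h1 : ∑ i, (R i i).re = R.trace.re := by
        rw [Matrix.trace, Complex.re_sum]
        rfl
      have h3 : ∑ j, wfill μ (ev j) = P := by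
        rw [← hpsum, ← Equiv.sum_comp e (fun j => wfill μ (ev j))]
        exact (Finset.sum_congr rfl fun i _ => by rw [hpw i, he i]).symm
      rw [h1, h3, htrR, htrQ]
      exact htr
    have hWF := waterfill μ hμ ev (fun i => (R i i).re) hevnn hqnn hsumq
    calc (1 + T).det.re ≤ ∏ i, ((1 + T) i i).re := hHad
      _ = ∏ i, (1 + ev i * (R i i).re) := Finset.prod_congr rfl fun i _ => hTii i
      _ ≤ ∏ i, (1 + wfill μ (ev i) * ev i) := hWF
      _ = ∏ i, (1 + p i * lam i) := by
          rw [← Equiv.prod_comp e (fun j => 1 + wfill μ (ev j) * ev j)]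
          exact Finset.prod_congr rfl fun i _ => by rw [← he i, ← hpw i]
  · -- part (ii)
    set V : Matrix (Fin (M - N)) (Fin (M - N)) ℂ := U.submatrix id ⇑e with hVdef
    have hVc : Vᴴ = Uᴴ.submatrix ⇑e id := by
      rw [hVdef, Matrix.conjTranspose_submatrix]
    have hVV : Vᴴ * V = 1 := by
      rw [hVc, hVdef]
      have h := Matrix.submatrix_mul_equiv Uᴴ U ⇑e (Equiv.refl _) ⇑e
      rw [Equiv.coe_refl] at h
      rw [h, hU1, Matrix.submatrix_one_equiv]
    have hdiagV : Vᴴ * (Gᴴ * G) * V = Matrix.diagonal (fun i => ((lam i : ℝ) : ℂ)) := by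
      rw [hVc, hVdef]
      have h0 := Matrix.submatrix_mul_equiv Uᴴ (Gᴴ * G) ⇑e (Equiv.refl _) id
      rw [Equiv.coe_refl, Matrix.submatrix_id_id] at h0
      rw [h0]
      have h1 := Matrix.submatrix_mul_equiv (Uᴴ * (Gᴴ * G)) U ⇑e (Equiv.refl _) ⇑e
      rw [Equiv.coe_refl] at h1
      rw [h1, hspec, Matrix.submatrix_diagonal_equiv]
      exact congrArg Matrix.diagonal (funext fun i => by
        show ((ev (e i) : ℝ) : ℂ) = ((lam i : ℝ) : ℂ)
        rw [he i])
    set dp : Matrix (Fin (M - N)) (Fin (M - N)) ℂ :=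
      Matrix.diagonal (fun i => (p i : ℂ)) with hdpdef
    refine ⟨W * V, ?_, ?_, ?_, ?_⟩
    · rw [Matrix.conjTranspose_mul, Matrix.mul_assoc, ← Matrix.mul_assoc Wᴴ W V, hW,
        Matrix.one_mul, hVV]
    · rw [← Matrix.mul_assoc, hH21W, Matrix.zero_mul]
    · have hZZ : (W * V)ᴴ * (W * V) = 1 := by
        rw [Matrix.conjTranspose_mul, Matrix.mul_assoc, ← Matrix.mul_assoc Wᴴ W V, hW,
          Matrix.one_mul, hVV]
      have htr1 : (W * V * dp * (W * V)ᴴ).trace = dp.trace := by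
        rw [Matrix.trace_mul_cycle, hZZ, Matrix.one_mul]
      rw [htr1, hdpdef, Matrix.trace_diagonal, Complex.re_sum]
      simp only [Complex.ofReal_re]
      rw [hpsum]
    · have hXd : 1 + Ssq⁻¹ * H22 * (W * V * dp * (W * V)ᴴ) * H22ᴴ * Ssq⁻¹
          = 1 + G * (V * dp * Vᴴ * Gᴴ) := by
        rw [hGH, hGdef]
        simp only [Matrix.conjTranspose_mul, Matrix.mul_assoc]
      rw [hXd, Matrix.det_one_add_mul_comm]
      have h2 : 1 + V * dp * Vᴴ * Gᴴ * G = 1 + (V * dp) * (Vᴴ * (Gᴴ * G)) := by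
        simp only [Matrix.mul_assoc]
      rw [h2, Matrix.det_one_add_mul_comm]
      have h3 : 1 + Vᴴ * (Gᴴ * G) * (V * dp) = 1 + Matrix.diagonal (fun i => ((lam i : ℝ) : ℂ)) * dp := by
        rw [← Matrix.mul_assoc, hdiagV]
      rw [h3, hdpdef, Matrix.diagonal_mul_diagonal]
      rw [show (1 : Matrix (Fin (M - N)) (Fin (M - N)) ℂ) = Matrix.diagonal (fun _ => (1 : ℂ)) from
        (Matrix.diagonal_one).symm, Matrix.diagonal_add, Matrix.det_diagonal]
      have : ∏ i, ((1 : ℂ) + (lam i : ℂ) * (p i : ℂ)) = ((∏ i, (1 + p i * lam i) : ℝ) : ℂ) := by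
        push_cast
        exact Finset.prod_congr rfl fun i _ => by ring
      rw [this, Complex.ofReal_re]
end
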